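/- Let A₁, A₂ be Hopf algebras with Hopf subalgebras Uᵢ ⊂ Aᵢ, (H, R) a quasitriangular Hopf algebra with Hopf algebra morphisms φᵢ : H → Aᵢ, and J = (φ₁ ⊗ φ₂ ⊗ φ₁ ⊗ φ₂)(R₂₃) the associated twisting element of A₁ ⊗ A₂. If (φ₂ ⊗ φ₁)(R) ∈ U₂ ⊗ U₁ + A₂ ⊗ [U₁, U₁], then U₁ ⊗ U₂ is a right strongly coisotropic subalgebra of the twisted Hopf algebra (A₁ ⊗ A₂)_J, i.e. Δ_{(A₁⊗A₂)_J}(U₁ ⊗ U₂) ⊂ (U₁⊗U₂) ⊗ (U₁⊗U₂) + (A₁⊗A₂) ⊗ [U₁⊗U₂, U₁⊗U₂]. -/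

import Mathlib

open TensorProduct

universe u

/-- A quasitriangular structure on a Hopf algebra `H`: an invertible element
`R ∈ H ⊗ H` with `Δᵒᵖ = R Δ R⁻¹` and the hexagon identities
`(I ⊗ Δ)(R) = R₁₃R₁₂`, `(Δ ⊗ I)(R) = R₁₃R₂₃`. -/
structure QuasiTriangular (K H : Type u) [Field K] [Ring H] [HopfAlgebra K H] where
  R : H ⊗[K] H
  Rinv : H ⊗[K] H
  mul_inv : R * Rinv = 1
  inv_mul : Rinv * R = 1
  /-- `Δᵒᵖ(h) R = R Δ(h)`, i.e. `Δᵒᵖ = R Δ R⁻¹`. -/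
  compat : ∀ h : H,
    (TensorProduct.comm K H H) (Coalgebra.comul (R := K) h) * R = R * Coalgebra.comul (R := K) h
  /-- `(I ⊗ Δ)(R) = R₁₃ R₁₂` in `H ⊗ (H ⊗ H)`. -/
  hex1 : LinearMap.lTensor H (Coalgebra.comul (R := K) (A := H)) R
    = Algebra.TensorProduct.map (AlgHom.id K H) Algebra.TensorProduct.includeRight R
      * Algebra.TensorProduct.map (AlgHom.id K H) Algebra.TensorProduct.includeLeft R
  /-- `(Δ ⊗ I)(R) = R₁₃ R₂₃` in `H ⊗ (H ⊗ H)`. -/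
  hex2 : Algebra.TensorProduct.assoc (R := K) (S := K) (T := K) (A := H) (C := H) (D := H)
      (LinearMap.rTensor H (Coalgebra.comul (R := K) (A := H)) R)
    = Algebra.TensorProduct.map (AlgHom.id K H) Algebra.TensorProduct.includeRight R
      * (Algebra.TensorProduct.includeRight : (H ⊗[K] H) →ₐ[K] H ⊗[K] (H ⊗[K] H)) R

section defs

variable (K : Type u) [Field K]

/-- the image of `p ⊗ q` in `M ⊗ N`, for submodules `p ⊆ M`, `q ⊆ N`. -/
noncomputable def tpSubM {M N : Type u} [AddCommMonoid M] [Module K M]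
    [AddCommMonoid N] [Module K N] (p : Submodule K M) (q : Submodule K N) :
    Submodule K (M ⊗[K] N) :=
  Submodule.map₂ (TensorProduct.mk K M N) p q

/-- the two-sided ideal generated by the commutators of a (subalgebra given as a)
submodule `S`, spanned by the elements `a(bc − cb)d` with `a,b,c,d ∈ S`. -/
def commIdealS {A : Type u} [Ring A] [Algebra K A] (S : Submodule K A) : Submodule K A :=
  Submodule.span K
    {z : A | ∃ a ∈ S, ∃ b ∈ S, ∃ c ∈ S, ∃ d ∈ S, z = a * (b * c - c * b) * d}

end defs


section myhelpers

variable {K : Type u} [Field K]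

theorem tmul_mem_tpSubM {M N : Type u} [AddCommMonoid M] [Module K M] [AddCommMonoid N]
    [Module K N] {p : Submodule K M} {q : Submodule K N} {m : M} {n : N}
    (hm : m ∈ p) (hn : n ∈ q) : m ⊗ₜ[K] n ∈ tpSubM K p q :=
  Submodule.apply_mem_map₂ _ hm hn

theorem tpSubM_induction {M N : Type u} [AddCommMonoid M] [Module K M] [AddCommMonoid N]
    [Module K N] {p : Submodule K M} {q : Submodule K N} {P : M ⊗[K] N → Prop}
    (h0 : P 0)
    (htmul : ∀ m ∈ p, ∀ n ∈ q, P (m ⊗ₜ[K] n))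
    (hadd : ∀ x y, P x → P y → P (x + y))
    (hsmul : ∀ (c : K) x, P x → P (c • x))
    {z : M ⊗[K] N} (hz : z ∈ tpSubM K p q) : P z := by
  rw [tpSubM, Submodule.map₂_eq_span_image2] at hz
  refine Submodule.span_induction (p := fun x _ => P x) ?_ h0 (fun x y _ _ => hadd x y)
    (fun c x _ => hsmul c x) hz
  rintro x ⟨m, hm, n, hn, rfl⟩
  exact htmul m hm n hn

theorem tpSubM_mono {M N : Type u} [AddCommMonoid M] [Module K M] [AddCommMonoid N]
    [Module K N] {p p' : Submodule K M} {q q' : Submodule K N} (hp : p ≤ p') (hq : q ≤ q') :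
    tpSubM K p q ≤ tpSubM K p' q' :=
  Submodule.map₂_le.2 fun m hm n hn => tmul_mem_tpSubM (hp hm) (hq hn)

theorem map_tpSubM {M N M' N' : Type u} [AddCommMonoid M] [Module K M] [AddCommMonoid N]
    [Module K N] [AddCommMonoid M'] [Module K M'] [AddCommMonoid N'] [Module K N']
    (f : M →ₗ[K] M') (g : N →ₗ[K] N') {p : Submodule K M} {q : Submodule K N}
    {z : M ⊗[K] N} (hz : z ∈ tpSubM K p q) :
    TensorProduct.map f g z ∈ tpSubM K (p.map f) (q.map g) := by
  refine tpSubM_induction (P := fun z => TensorProduct.map f g z ∈ tpSubM K (p.map f) (q.map g))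
    (by simp) (fun m hm n hn => ?_) (fun x y hx hy => ?_) (fun c x hx => ?_) hz
  · beta_reduce; simpa using tmul_mem_tpSubM (Submodule.mem_map_of_mem hm) (Submodule.mem_map_of_mem hn)
  · beta_reduce; simpa using Submodule.add_mem _ hx hy
  · beta_reduce; simpa using Submodule.smul_mem _ c hx

theorem tpSubM_tmul_mul {A B : Type u} [Ring A] [Algebra K A] [Ring B] [Algebra K B]
    {p p' r : Submodule K A} {q q' s : Submodule K B}
    (hA : ∀ a ∈ p, ∀ a' ∈ p', a * a' ∈ r) (hB : ∀ b ∈ q, ∀ b' ∈ q', b * b' ∈ s)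
    {a : A} {b : B} (ha : a ∈ p) (hb : b ∈ q)
    {y : A ⊗[K] B} (hy : y ∈ tpSubM K p' q') :
    a ⊗ₜ[K] b * y ∈ tpSubM K r s := by
  refine tpSubM_induction (P := fun y => a ⊗ₜ[K] b * y ∈ tpSubM K r s)
    (by simp) (fun a' ha' b' hb' => ?_) (fun y₁ y₂ h1 h2 => ?_) (fun c y h => ?_) hy
  · beta_reduce; rw [Algebra.TensorProduct.tmul_mul_tmul]
    exact tmul_mem_tpSubM (hA a ha a' ha') (hB b hb b' hb')
  · beta_reduce; rw [mul_add]; exact Submodule.add_mem _ h1 h2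
  · beta_reduce; rw [Algebra.mul_smul_comm]; exact Submodule.smul_mem _ _ h

theorem tpSubM_mul {A B : Type u} [Ring A] [Algebra K A] [Ring B] [Algebra K B]
    {p p' r : Submodule K A} {q q' s : Submodule K B}
    (hA : ∀ a ∈ p, ∀ a' ∈ p', a * a' ∈ r) (hB : ∀ b ∈ q, ∀ b' ∈ q', b * b' ∈ s)
    {x y : A ⊗[K] B} (hx : x ∈ tpSubM K p q) (hy : y ∈ tpSubM K p' q') :
    x * y ∈ tpSubM K r s := by
  refine tpSubM_induction (P := fun x => x * y ∈ tpSubM K r s)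
    (by simp) (fun a ha b hb => tpSubM_tmul_mul hA hB ha hb hy)
    (fun x₁ x₂ h1 h2 => ?_) (fun c x h => ?_) hx
  · beta_reduce; rw [add_mul]; exact Submodule.add_mem _ h1 h2
  · beta_reduce; rw [Algebra.smul_mul_assoc]; exact Submodule.smul_mem _ _ h

theorem commIdealS_le {A : Type u} [Ring A] [Algebra K A] {S : Submodule K A}
    (hmul : ∀ a ∈ S, ∀ b ∈ S, a * b ∈ S) : commIdealS K S ≤ S := by
  rw [commIdealS, Submodule.span_le]
  rintro _ ⟨a, ha, b, hb, c, hc, d, hd, rfl⟩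
  exact hmul _ (hmul a ha _ (Submodule.sub_mem _ (hmul b hb c hc) (hmul c hc b hb))) d hd

theorem mul_commIdealS {A : Type u} [Ring A] [Algebra K A] {S : Submodule K A}
    (hmul : ∀ a ∈ S, ∀ b ∈ S, a * b ∈ S) {x i : A} (hx : x ∈ S) (hi : i ∈ commIdealS K S) :
    x * i ∈ commIdealS K S := by
  refine Submodule.span_induction (p := fun i _ => x * i ∈ commIdealS K S) ?_ (by simp)
    (fun y z _ _ hy hz => by beta_reduce; rw [mul_add]; exact Submodule.add_mem _ hy hz)
    (fun c y _ hy => by beta_reduce; rw [Algebra.mul_smul_comm]; exact Submodule.smul_mem _ _ hy) hi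
  rintro _ ⟨a, ha, b, hb, c, hc, d, hd, rfl⟩
  refine Submodule.subset_span ⟨x * a, hmul x hx a ha, b, hb, c, hc, d, hd, by simp [mul_assoc]⟩

theorem commIdealS_mul {A : Type u} [Ring A] [Algebra K A] {S : Submodule K A}
    (hmul : ∀ a ∈ S, ∀ b ∈ S, a * b ∈ S) {i x : A} (hi : i ∈ commIdealS K S) (hx : x ∈ S) :
    i * x ∈ commIdealS K S := by
  refine Submodule.span_induction (p := fun i _ => i * x ∈ commIdealS K S) ?_ (by simp)
    (fun y z _ _ hy hz => by beta_reduce; rw [add_mul]; exact Submodule.add_mem _ hy hz)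
    (fun c y _ hy => by beta_reduce; rw [Algebra.smul_mul_assoc]; exact Submodule.smul_mem _ _ hy) hi
  rintro _ ⟨a, ha, b, hb, c, hc, d, hd, rfl⟩
  refine Submodule.subset_span ⟨a, ha, b, hb, c, hc, d * x, hmul d hd x hx, by simp [mul_assoc]⟩

theorem commIdealS_map {A B : Type u} [Ring A] [Algebra K A] [Ring B] [Algebra K B]
    (f : A →ₐ[K] B) {S : Submodule K A} {T : Submodule K B} (hf : ∀ a ∈ S, f a ∈ T)
    {i : A} (hi : i ∈ commIdealS K S) : f i ∈ commIdealS K T := by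
  refine Submodule.span_induction (p := fun i _ => f i ∈ commIdealS K T) ?_ (by simp)
    (fun y z _ _ hy hz => by beta_reduce; rw [map_add]; exact Submodule.add_mem _ hy hz)
    (fun c y _ hy => by beta_reduce; rw [map_smul]; exact Submodule.smul_mem _ _ hy) hi
  rintro _ ⟨a, ha, b, hb, c, hc, d, hd, rfl⟩
  refine Submodule.subset_span ⟨f a, hf a ha, f b, hf b hb, f c, hf c hc, f d, hf d hd, by
    simp [map_mul, map_sub]⟩

end myhelpers

section anti
variable {K H : Type u} [Field K] [Ring H] [HopfAlgebra K H]

noncomputable def psiMap : H ⊗[K] (H ⊗[K] H) →ₗ[K] H ⊗[K] H :=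
  LinearMap.rTensor H (LinearMap.mul' K H)
    ∘ₗ (TensorProduct.assoc K H H H).symm.toLinearMap
    ∘ₗ LinearMap.rTensor (H ⊗[K] H) (HopfAlgebra.antipode (R := K))

@[simp] theorem psiMap_tmul (a b c : H) :
    psiMap (a ⊗ₜ[K] (b ⊗ₜ[K] c)) = (HopfAlgebra.antipode (R := K) a * b) ⊗ₜ[K] c := by
  simp [psiMap]

noncomputable def chiMap : H ⊗[K] (H ⊗[K] H) →ₗ[K] H ⊗[K] H :=
  (TensorProduct.lid K (H ⊗[K] H)).toLinearMap
    ∘ₗ LinearMap.rTensor (H ⊗[K] H) (Coalgebra.counit (R := K))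

@[simp] theorem chiMap_tmul (a : H) (y : H ⊗[K] H) :
    chiMap (a ⊗ₜ[K] y) = Coalgebra.counit (R := K) a • y := by
  simp [chiMap]

noncomputable def eps1 : H ⊗[K] H →ₗ[K] H :=
  (TensorProduct.lid K H).toLinearMap ∘ₗ LinearMap.rTensor H (Coalgebra.counit (R := K))

@[simp] theorem eps1_tmul (a b : H) :
    eps1 (a ⊗ₜ[K] b) = Coalgebra.counit (R := K) a • b := by
  simp [eps1]

theorem claimB (x y : H ⊗[K] H) :
    psiMap ((Algebra.TensorProduct.map (AlgHom.id K H)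
        (Algebra.TensorProduct.includeRight (A := H) (B := H)) x)
      * (Algebra.TensorProduct.includeRight : (H ⊗[K] H) →ₐ[K] H ⊗[K] (H ⊗[K] H)) y)
    = LinearMap.rTensor H (HopfAlgebra.antipode (R := K)) x * y := by
  induction x using TensorProduct.induction_on with
  | zero => simp
  | add x₁ x₂ h1 h2 => simp only [map_add, add_mul, h1, h2]
  | tmul a b =>
    induction y using TensorProduct.induction_on with
    | zero => simp
    | add y₁ y₂ h1 h2 => simp only [map_add, mul_add, h1, h2]
    | tmul c d =>
      simp [Algebra.TensorProduct.tmul_mul_tmul, LinearMap.rTensor_tmul]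

theorem claimB' (x y : H ⊗[K] H) :
    chiMap ((Algebra.TensorProduct.map (AlgHom.id K H)
        (Algebra.TensorProduct.includeRight (A := H) (B := H)) x)
      * (Algebra.TensorProduct.includeRight : (H ⊗[K] H) →ₐ[K] H ⊗[K] (H ⊗[K] H)) y)
    = ((1 : H) ⊗ₜ[K] eps1 x) * y := by
  induction x using TensorProduct.induction_on with
  | zero => simp
  | add x₁ x₂ h1 h2 =>
    simp only [map_add, add_mul, h1, h2, TensorProduct.tmul_add, add_mul]
  | tmul a b =>
    induction y using TensorProduct.induction_on with
    | zero => simp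
    | add y₁ y₂ h1 h2 => simp only [map_add, mul_add, h1, h2]
    | tmul c d =>
      simp [Algebra.TensorProduct.tmul_mul_tmul, TensorProduct.smul_tmul',
        TensorProduct.tmul_smul, smul_mul_assoc, mul_smul_comm]

theorem rinv_eq (Q : QuasiTriangular K H) :
    Q.Rinv = LinearMap.rTensor H (HopfAlgebra.antipode (R := K)) Q.R := by
  classical
  -- the algebra associator as a linear map
  set assocA : (H ⊗[K] H) ⊗[K] H →ₗ[K] H ⊗[K] (H ⊗[K] H) :=
    (Algebra.TensorProduct.assoc (R := K) (S := K) (T := K) (A := H) (C := H) (D := H)).toLinearMap with hassocA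
  have hassoc_apply : ∀ z : (H ⊗[K] H) ⊗[K] H,
      (Algebra.TensorProduct.assoc (R := K) (S := K) (T := K) (A := H) (C := H) (D := H)) z = assocA z := fun z => rfl
  -- Claim A0 : psiMap ∘ assoc = rTensor (mul' ∘ rTensor antipode)
  have hA0 : psiMap ∘ₗ assocA = LinearMap.rTensor H
      (LinearMap.mul' K H ∘ₗ LinearMap.rTensor H (HopfAlgebra.antipode (R := K))) := by
    apply TensorProduct.ext_threefold
    intro a b c
    simp [hassocA, Algebra.TensorProduct.assoc_tmul]
  have hC0 : chiMap ∘ₗ assocA = LinearMap.rTensor H (eps1 (K := K) (H := H)) := by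
    apply TensorProduct.ext_threefold
    intro a b c
    simp [hassocA, Algebra.TensorProduct.assoc_tmul, TensorProduct.smul_tmul']
  -- Eq1 : rTensor (unit ∘ counit) R = (S ⊗ id)(R) * R
  have e1 : LinearMap.rTensor H
      ((Algebra.linearMap K H) ∘ₗ (Coalgebra.counit (R := K) (A := H))) Q.R
      = LinearMap.rTensor H (HopfAlgebra.antipode (R := K)) Q.R * Q.R := by
    have h := congrArg psiMap Q.hex2
    rw [claimB, hassoc_apply, ← LinearMap.comp_apply, hA0, ← LinearMap.comp_apply,
      ← LinearMap.rTensor_comp, LinearMap.comp_assoc,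
      HopfAlgebra.mul_antipode_rTensor_comul] at h
    exact h
  -- Eq2 : R = (1 ⊗ e) * R
  have heps_comul : (eps1 (K := K) (H := H)) ∘ₗ Coalgebra.comul (R := K) = LinearMap.id := by
    apply LinearMap.ext
    intro a
    simp [eps1, Coalgebra.rTensor_counit_comul]
  have e2 : Q.R = ((1 : H) ⊗ₜ[K] eps1 Q.R) * Q.R := by
    have h := congrArg chiMap Q.hex2
    rw [claimB', hassoc_apply, ← LinearMap.comp_apply, hC0, ← LinearMap.comp_apply,
      ← LinearMap.rTensor_comp, heps_comul, LinearMap.rTensor_id, LinearMap.id_apply] at h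
    exact h
  -- 1 ⊗ e = 1
  have h1e : ((1 : H) ⊗ₜ[K] eps1 Q.R : H ⊗[K] H) = 1 := by
    have := congrArg (· * Q.Rinv) e2
    simpa [mul_assoc, Q.mul_inv] using this.symm
  -- rTensor (unit ∘ counit) x = 1 ⊗ eps1 x
  have claimD : ∀ x : H ⊗[K] H, LinearMap.rTensor H
      ((Algebra.linearMap K H) ∘ₗ (Coalgebra.counit (R := K) (A := H))) x
      = (1 : H) ⊗ₜ[K] eps1 x := by
    intro x
    induction x using TensorProduct.induction_on with
    | zero => simp
    | add x₁ x₂ h1 h2 => simp only [map_add, h1, h2, TensorProduct.tmul_add]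
    | tmul a b =>
      simp only [LinearMap.rTensor_tmul, LinearMap.comp_apply, Algebra.linearMap_apply,
        Algebra.algebraMap_eq_smul_one, TensorProduct.smul_tmul, eps1_tmul]
  -- (S ⊗ id)(R) * R = 1
  have key : LinearMap.rTensor H (HopfAlgebra.antipode (R := K)) Q.R * Q.R = 1 := by
    rw [← e1, claimD, h1e]
  calc Q.Rinv = 1 * Q.Rinv := (one_mul _).symm
    _ = (LinearMap.rTensor H (HopfAlgebra.antipode (R := K)) Q.R * Q.R) * Q.Rinv := by rw [key]
    _ = LinearMap.rTensor H (HopfAlgebra.antipode (R := K)) Q.R * (Q.R * Q.Rinv) := by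
        rw [mul_assoc]
    _ = LinearMap.rTensor H (HopfAlgebra.antipode (R := K)) Q.R := by rw [Q.mul_inv, mul_one]

end anti



/- STATEMENT 17: Let A₁, A₂ be Hopf algebras with Hopf subalgebras Uᵢ ⊆ Aᵢ, (H, R) a
quasitriangular Hopf algebra with Hopf algebra morphisms φᵢ : H → Aᵢ, and
J = (φ₁ ⊗ φ₂ ⊗ φ₁ ⊗ φ₂)(R₂₃). If (φ₂ ⊗ φ₁)(R) ∈ U₂ ⊗ U₁ + A₂ ⊗ [U₁,U₁], then U₁ ⊗ U₂
is a right strongly coisotropic subalgebra of the twist (A₁ ⊗ A₂)_J. -/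

set_option maxHeartbeats 2000000 in
set_option synthInstance.maxHeartbeats 400000 in
theorem stmt17 {K H A₁ A₂ : Type u} [Field K] [Ring H] [HopfAlgebra K H]
    [Ring A₁] [HopfAlgebra K A₁] [Ring A₂] [HopfAlgebra K A₂]
    (Q : QuasiTriangular K H)
    -- Hopf algebra morphisms φᵢ : H → Aᵢ
    (φ₁ : H →ₐc[K] A₁) (φ₂ : H →ₐc[K] A₂)
    (hS₁ : ∀ h : H, φ₁ (HopfAlgebra.antipode (R := K) h) = HopfAlgebra.antipode (R := K) (φ₁ h))
    (hS₂ : ∀ h : H, φ₂ (HopfAlgebra.antipode (R := K) h) = HopfAlgebra.antipode (R := K) (φ₂ h))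
    -- Hopf subalgebras Uᵢ ⊆ Aᵢ
    (U₁ : Subalgebra K A₁) (U₂ : Subalgebra K A₂)
    (hU₁Δ : ∀ u ∈ U₁, Coalgebra.comul (R := K) u ∈ tpSubM K U₁.toSubmodule U₁.toSubmodule)
    (hU₂Δ : ∀ u ∈ U₂, Coalgebra.comul (R := K) u ∈ tpSubM K U₂.toSubmodule U₂.toSubmodule)
    (hU₁S : ∀ u ∈ U₁, HopfAlgebra.antipode (R := K) u ∈ U₁)
    (hU₂S : ∀ u ∈ U₂, HopfAlgebra.antipode (R := K) u ∈ U₂)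
    -- the compatibility hypothesis (φ₂ ⊗ φ₁)(R) ∈ U₂ ⊗ U₁ + A₂ ⊗ [U₁, U₁]
    (hR : TensorProduct.map (φ₂ : H →ₗ[K] A₂) (φ₁ : H →ₗ[K] A₁) Q.R
      ∈ tpSubM K U₂.toSubmodule U₁.toSubmodule
        ⊔ tpSubM K ⊤ (commIdealS K U₁.toSubmodule))
    -- the twisting element J = (φ₁ ⊗ φ₂ ⊗ φ₁ ⊗ φ₂)(R₂₃) and its inverse
    (J Ji : (A₁ ⊗[K] A₂) ⊗[K] (A₁ ⊗[K] A₂))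
    (hJ : J = Algebra.TensorProduct.map
      ((Algebra.TensorProduct.includeRight : A₂ →ₐ[K] A₁ ⊗[K] A₂).comp (φ₂ : H →ₐ[K] A₂))
      ((Algebra.TensorProduct.includeLeft : A₁ →ₐ[K] A₁ ⊗[K] A₂).comp (φ₁ : H →ₐ[K] A₁)) Q.R)
    (hJi : Ji = Algebra.TensorProduct.map
      ((Algebra.TensorProduct.includeRight : A₂ →ₐ[K] A₁ ⊗[K] A₂).comp (φ₂ : H →ₐ[K] A₂))
      ((Algebra.TensorProduct.includeLeft : A₁ →ₐ[K] A₁ ⊗[K] A₂).comp (φ₁ : H →ₐ[K] A₁)) Q.Rinv) :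
    -- then U₁ ⊗ U₂ is right strongly coisotropic in (A₁ ⊗ A₂)_J :
    ∀ z ∈ tpSubM K U₁.toSubmodule U₂.toSubmodule,
      Ji * Coalgebra.comul (R := K) z * J ∈
        tpSubM K (tpSubM K U₁.toSubmodule U₂.toSubmodule)
          (tpSubM K U₁.toSubmodule U₂.toSubmodule)
        ⊔ tpSubM K ⊤ (commIdealS K (tpSubM K U₁.toSubmodule U₂.toSubmodule)) := by
  classical
  intro z hz
  set Sm : Submodule K (A₁ ⊗[K] A₂) := tpSubM K U₁.toSubmodule U₂.toSubmodule with hSmdef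
  set IS : Submodule K (A₁ ⊗[K] A₂) := commIdealS K Sm with hISdef
  set T := tpSubM K Sm Sm with hTdef
  set C := tpSubM K (⊤ : Submodule K (A₁ ⊗[K] A₂)) IS with hCdef
  have hSmul : ∀ a ∈ Sm, ∀ b ∈ Sm, a * b ∈ Sm := fun a ha b hb =>
    tpSubM_mul (fun x hx y hy => U₁.mul_mem hx hy) (fun x hx y hy => U₂.mul_mem hx hy) ha hb
  have hISle : IS ≤ Sm := commIdealS_le hSmul
  -- W := T ⊔ C is closed under multiplication
  have hWmul : ∀ x ∈ T ⊔ C, ∀ y ∈ T ⊔ C, x * y ∈ T ⊔ C := by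
    have hTT : ∀ x ∈ T, ∀ y ∈ T, x * y ∈ T := fun x hx y hy => tpSubM_mul hSmul hSmul hx hy
    have hTC : ∀ x ∈ T, ∀ y ∈ C, x * y ∈ C := fun x hx y hy =>
      tpSubM_mul (p := ⊤) (r := ⊤) (fun _ _ _ _ => Submodule.mem_top)
        (fun b hb b' hb' => mul_commIdealS hSmul hb hb')
        (tpSubM_mono le_top le_rfl hx) hy
    have hCT : ∀ x ∈ C, ∀ y ∈ T, x * y ∈ C := fun x hx y hy =>
      tpSubM_mul (p' := ⊤) (r := ⊤) (fun _ _ _ _ => Submodule.mem_top)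
        (fun b hb b' hb' => commIdealS_mul hSmul hb hb')
        hx (tpSubM_mono le_top le_rfl hy)
    have hCC : ∀ x ∈ C, ∀ y ∈ C, x * y ∈ C := fun x hx y hy =>
      tpSubM_mul (p' := ⊤) (r := ⊤) (fun _ _ _ _ => Submodule.mem_top)
        (fun b hb b' hb' => commIdealS_mul hSmul hb hb')
        hx (tpSubM_mono le_rfl hISle hy)
    intro x hx y hy
    obtain ⟨t, ht, c, hc, rfl⟩ := Submodule.mem_sup.1 hx
    obtain ⟨t', ht', c', hc', rfl⟩ := Submodule.mem_sup.1 hy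
    rw [add_mul, mul_add, mul_add]
    refine Submodule.add_mem _ (Submodule.add_mem _ (Submodule.mem_sup_left (hTT t ht t' ht'))
      (Submodule.mem_sup_right (hTC t ht c' hc'))) (Submodule.add_mem _
      (Submodule.mem_sup_right (hCT c hc t' ht'))
      (Submodule.mem_sup_right (hCC c hc c' hc')))
  -- Δ(z) ∈ T
  have hTTTC : ∀ x ∈ tpSubM K U₁.toSubmodule U₁.toSubmodule,
      ∀ y ∈ tpSubM K U₂.toSubmodule U₂.toSubmodule,
      (TensorProduct.tensorTensorTensorComm K A₁ A₁ A₂ A₂) (x ⊗ₜ[K] y) ∈ T := by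
    intro x hx
    refine tpSubM_induction (P := fun x => ∀ y ∈ tpSubM K U₂.toSubmodule U₂.toSubmodule,
      (TensorProduct.tensorTensorTensorComm K A₁ A₁ A₂ A₂) (x ⊗ₜ[K] y) ∈ T)
      (fun y _ => by simp) (fun a ha b hb y hy => ?_) (fun x₁ x₂ h1 h2 y hy => ?_)
      (fun c x h y hy => ?_) hx
    · refine tpSubM_induction (P := fun y =>
        (TensorProduct.tensorTensorTensorComm K A₁ A₁ A₂ A₂) ((a ⊗ₜ[K] b) ⊗ₜ[K] y) ∈ T)
        (by simp) (fun c hc d hd => ?_) (fun y₁ y₂ h1 h2 => ?_) (fun k y h => ?_) hy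
      · beta_reduce
        rw [TensorProduct.tensorTensorTensorComm_tmul]
        exact tmul_mem_tpSubM (tmul_mem_tpSubM ha hc) (tmul_mem_tpSubM hb hd)
      · beta_reduce; rw [TensorProduct.tmul_add, map_add]
        exact Submodule.add_mem _ h1 h2
      · beta_reduce; rw [TensorProduct.tmul_smul, map_smul]
        exact Submodule.smul_mem _ _ h
    · beta_reduce; rw [TensorProduct.add_tmul, map_add]
      exact Submodule.add_mem _ (h1 y hy) (h2 y hy)
    · beta_reduce; rw [← TensorProduct.smul_tmul', map_smul]
      exact Submodule.smul_mem _ _ (h y hy)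
  have hcomulz : Coalgebra.comul (R := K) z ∈ T := by
    refine tpSubM_induction (P := fun z => Coalgebra.comul (R := K) z ∈ T)
      (by simp) (fun u₁ hu₁ u₂ hu₂ => ?_) (fun x y hx hy => ?_) (fun c x hx => ?_) hz
    · beta_reduce
      rw [show Coalgebra.comul (R := K) (u₁ ⊗ₜ[K] u₂)
          = (TensorProduct.tensorTensorTensorComm K A₁ A₁ A₂ A₂)
            ((Coalgebra.comul (R := K) u₁) ⊗ₜ[K] (Coalgebra.comul (R := K) u₂)) from rfl]
      exact hTTTC _ (hU₁Δ u₁ hu₁) _ (hU₂Δ u₂ hu₂)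
    · beta_reduce; rw [map_add]; exact Submodule.add_mem _ hx hy
    · beta_reduce; rw [map_smul]; exact Submodule.smul_mem _ _ hx
  -- the inclusion maps
  set incL : A₁ →ₗ[K] A₁ ⊗[K] A₂ :=
    (Algebra.TensorProduct.includeLeft : A₁ →ₐ[K] A₁ ⊗[K] A₂).toLinearMap with hincLdef
  set incR : A₂ →ₗ[K] A₁ ⊗[K] A₂ :=
    (Algebra.TensorProduct.includeRight : A₂ →ₐ[K] A₁ ⊗[K] A₂).toLinearMap with hincRdef
  have hincL : ∀ a ∈ U₁.toSubmodule, incL a ∈ Sm := fun a ha => by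
    rw [show incL a = a ⊗ₜ[K] (1 : A₂) from rfl]
    exact tmul_mem_tpSubM ha U₂.one_mem
  have hincR : ∀ b ∈ U₂.toSubmodule, incR b ∈ Sm := fun b hb => by
    rw [show incR b = (1 : A₁) ⊗ₜ[K] b from rfl]
    exact tmul_mem_tpSubM U₁.one_mem hb
  -- mapping the hypothesis into the big tensor product
  have hJW : ∀ x ∈ tpSubM K U₂.toSubmodule U₁.toSubmodule
        ⊔ tpSubM K ⊤ (commIdealS K U₁.toSubmodule),
      TensorProduct.map incR incL x ∈ T ⊔ C := by
    intro x hx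
    obtain ⟨u, hu, v, hv, rfl⟩ := Submodule.mem_sup.1 hx
    rw [map_add]
    refine Submodule.add_mem _ (Submodule.mem_sup_left ?_) (Submodule.mem_sup_right ?_)
    · refine tpSubM_mono ?_ ?_ (map_tpSubM incR incL hu)
      · rintro _ ⟨b, hb, rfl⟩; exact hincR b hb
      · rintro _ ⟨a, ha, rfl⟩; exact hincL a ha
    · refine tpSubM_mono le_top ?_ (map_tpSubM incR incL hv)
      rintro _ ⟨i, hi, rfl⟩
      exact commIdealS_map (Algebra.TensorProduct.includeLeft : A₁ →ₐ[K] A₁ ⊗[K] A₂)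
        (fun a ha => hincL a ha) hi
  -- the algebra-map form of J equals a composition of linear maps
  have hmapJ : ∀ w : H ⊗[K] H,
      Algebra.TensorProduct.map
        ((Algebra.TensorProduct.includeRight : A₂ →ₐ[K] A₁ ⊗[K] A₂).comp (φ₂ : H →ₐ[K] A₂))
        ((Algebra.TensorProduct.includeLeft : A₁ →ₐ[K] A₁ ⊗[K] A₂).comp (φ₁ : H →ₐ[K] A₁)) w
      = TensorProduct.map incR incL
          (TensorProduct.map (φ₂ : H →ₗ[K] A₂) (φ₁ : H →ₗ[K] A₁) w) := by
    intro w
    induction w using TensorProduct.induction_on with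
    | zero => simp
    | add a b ha hb => simp only [map_add, ha, hb]
    | tmul a b => rfl
  have hJmem : J ∈ T ⊔ C := by
    rw [hJ, hmapJ]
    exact hJW _ hR
  -- the image of Rinv
  have hRinv : TensorProduct.map (φ₂ : H →ₗ[K] A₂) (φ₁ : H →ₗ[K] A₁) Q.Rinv
      ∈ tpSubM K U₂.toSubmodule U₁.toSubmodule
        ⊔ tpSubM K ⊤ (commIdealS K U₁.toSubmodule) := by
    have hcommS : TensorProduct.map (φ₂ : H →ₗ[K] A₂) (φ₁ : H →ₗ[K] A₁) ∘ₗ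
        LinearMap.rTensor H (HopfAlgebra.antipode (R := K))
        = TensorProduct.map (HopfAlgebra.antipode (R := K) (A := A₂)) LinearMap.id ∘ₗ
          TensorProduct.map (φ₂ : H →ₗ[K] A₂) (φ₁ : H →ₗ[K] A₁) := by
      apply TensorProduct.ext'
      intro a b
      simp [hS₂ a]
    rw [rinv_eq Q, ← LinearMap.comp_apply, hcommS, LinearMap.comp_apply]
    obtain ⟨u, hu, v, hv, heq⟩ := Submodule.mem_sup.1 hR
    rw [← heq, map_add]
    refine Submodule.add_mem _ (Submodule.mem_sup_left ?_) (Submodule.mem_sup_right ?_)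
    · refine tpSubM_mono ?_ ?_
        (map_tpSubM (HopfAlgebra.antipode (R := K) (A := A₂)) LinearMap.id hu)
      · rintro _ ⟨b, hb, rfl⟩; exact hU₂S b hb
      · rw [Submodule.map_id]
    · refine tpSubM_mono le_top ?_
        (map_tpSubM (HopfAlgebra.antipode (R := K) (A := A₂)) LinearMap.id hv)
      rw [Submodule.map_id]
  have hJimem : Ji ∈ T ⊔ C := by
    rw [hJi, hmapJ]
    exact hJW _ hRinv
  exact hWmul _ (hWmul _ hJimem _ (Submodule.mem_sup_left hcomulz)) _ hJmem
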